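/- At every nondegenerate u ∈ ℝ³ the height h_ij^k at the edge {ij} can be computed from either endpoint of the edge: (d_ik(u) − d_ij(u) cos θ_jk^i(u))/sin θ_jk^i(u) = (d_jk(u) − d_ji(u) cos θ_ki^j(u))/sin θ_ki^j(u). -/

import Mathlib

open Real Filter Topology

/-- Edge length of a decorated edge with inversive distance `I`, base radii `ra, rb`
and conformal factors `x, y`. -/
noncomputable def elen (I ra rb x y : ℝ) : ℝ :=
  Real.sqrt ((Real.exp x * ra) ^ 2 + (Real.exp y * rb) ^ 2 +
    2 * I * (Real.exp x * ra) * (Real.exp y * rb))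

/-- Inner angle of a Euclidean triangle opposite the side `lc`, adjacent to `la, lb`. -/
noncomputable def ang (la lb lc : ℝ) : ℝ :=
  Real.arccos ((la ^ 2 + lb ^ 2 - lc ^ 2) / (2 * la * lb))

/-- Signed distance of the edge center to the vertex with scaled radius `ra`. -/
noncomputable def dCen (I ra rb l : ℝ) : ℝ := (ra ^ 2 + I * ra * rb) / l

/-- Signed height `(d_ac - d_ab * cos th) / sin th`. -/
noncomputable def hgt (dac dab th : ℝ) : ℝ := (dac - dab * Real.cos th) / Real.sin th

/-- Strict triangle inequalities for three side lengths. -/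
def Nondeg (a b c : ℝ) : Prop := a < b + c ∧ b < c + a ∧ c < a + b

noncomputable def Lij (ri rj rk Iij Ijk Iki ui uj uk : ℝ) : ℝ := elen Iij ri rj ui uj
noncomputable def Ljk (ri rj rk Iij Ijk Iki ui uj uk : ℝ) : ℝ := elen Ijk rj rk uj uk
noncomputable def Lki (ri rj rk Iij Ijk Iki ui uj uk : ℝ) : ℝ := elen Iki rk ri uk ui

/-- Inner angle `θ_jk^i` at vertex `i`. -/
noncomputable def ThI (ri rj rk Iij Ijk Iki ui uj uk : ℝ) : ℝ :=
  ang (Lij ri rj rk Iij Ijk Iki ui uj uk) (Lki ri rj rk Iij Ijk Iki ui uj uk)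
    (Ljk ri rj rk Iij Ijk Iki ui uj uk)

/-- Inner angle `θ_ki^j` at vertex `j`. -/
noncomputable def ThJ (ri rj rk Iij Ijk Iki ui uj uk : ℝ) : ℝ :=
  ang (Lij ri rj rk Iij Ijk Iki ui uj uk) (Ljk ri rj rk Iij Ijk Iki ui uj uk)
    (Lki ri rj rk Iij Ijk Iki ui uj uk)

/-- Inner angle `θ_ij^k` at vertex `k`. -/
noncomputable def ThK (ri rj rk Iij Ijk Iki ui uj uk : ℝ) : ℝ :=
  ang (Ljk ri rj rk Iij Ijk Iki ui uj uk) (Lki ri rj rk Iij Ijk Iki ui uj uk)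
    (Lij ri rj rk Iij Ijk Iki ui uj uk)

noncomputable def Dij (ri rj rk Iij Ijk Iki ui uj uk : ℝ) : ℝ :=
  dCen Iij (Real.exp ui * ri) (Real.exp uj * rj) (Lij ri rj rk Iij Ijk Iki ui uj uk)
noncomputable def Dji (ri rj rk Iij Ijk Iki ui uj uk : ℝ) : ℝ :=
  dCen Iij (Real.exp uj * rj) (Real.exp ui * ri) (Lij ri rj rk Iij Ijk Iki ui uj uk)
noncomputable def Djk (ri rj rk Iij Ijk Iki ui uj uk : ℝ) : ℝ :=
  dCen Ijk (Real.exp uj * rj) (Real.exp uk * rk) (Ljk ri rj rk Iij Ijk Iki ui uj uk)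
noncomputable def Dkj (ri rj rk Iij Ijk Iki ui uj uk : ℝ) : ℝ :=
  dCen Ijk (Real.exp uk * rk) (Real.exp uj * rj) (Ljk ri rj rk Iij Ijk Iki ui uj uk)
noncomputable def Dki (ri rj rk Iij Ijk Iki ui uj uk : ℝ) : ℝ :=
  dCen Iki (Real.exp uk * rk) (Real.exp ui * ri) (Lki ri rj rk Iij Ijk Iki ui uj uk)
noncomputable def Dik (ri rj rk Iij Ijk Iki ui uj uk : ℝ) : ℝ :=
  dCen Iki (Real.exp ui * ri) (Real.exp uk * rk) (Lki ri rj rk Iij Ijk Iki ui uj uk)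

/-- The height `h_ij^k`. -/
noncomputable def Hijk (ri rj rk Iij Ijk Iki ui uj uk : ℝ) : ℝ :=
  hgt (Dik ri rj rk Iij Ijk Iki ui uj uk) (Dij ri rj rk Iij Ijk Iki ui uj uk)
    (ThI ri rj rk Iij Ijk Iki ui uj uk)

/-- The height `h_ik^j`. -/
noncomputable def Hikj (ri rj rk Iij Ijk Iki ui uj uk : ℝ) : ℝ :=
  hgt (Dij ri rj rk Iij Ijk Iki ui uj uk) (Dik ri rj rk Iij Ijk Iki ui uj uk)
    (ThI ri rj rk Iij Ijk Iki ui uj uk)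

/-- The height `h_jk^i`. -/
noncomputable def Hjki (ri rj rk Iij Ijk Iki ui uj uk : ℝ) : ℝ :=
  hgt (Dji ri rj rk Iij Ijk Iki ui uj uk) (Djk ri rj rk Iij Ijk Iki ui uj uk)
    (ThJ ri rj rk Iij Ijk Iki ui uj uk)

/-- The height `h_ki^j`. -/
noncomputable def Hkij (ri rj rk Iij Ijk Iki ui uj uk : ℝ) : ℝ :=
  hgt (Dkj ri rj rk Iij Ijk Iki ui uj uk) (Dki ri rj rk Iij Ijk Iki ui uj uk)
    (ThK ri rj rk Iij Ijk Iki ui uj uk)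

/-- The area `A_ijk = (1/2) l_ij l_jk sin θ_ki^j`. -/
noncomputable def Area (ri rj rk Iij Ijk Iki ui uj uk : ℝ) : ℝ :=
  (1 / 2) * Lij ri rj rk Iij Ijk Iki ui uj uk * Ljk ri rj rk Iij Ijk Iki ui uj uk *
    Real.sin (ThJ ri rj rk Iij Ijk Iki ui uj uk)

/-- Nondegeneracy of the decorated triangle at `u`. -/
def NondegT (ri rj rk Iij Ijk Iki ui uj uk : ℝ) : Prop :=
  Nondeg (Lij ri rj rk Iij Ijk Iki ui uj uk) (Ljk ri rj rk Iij Ijk Iki ui uj uk)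
    (Lki ri rj rk Iij Ijk Iki ui uj uk)

lemma elen_arg_pos (I ra rb x y : ℝ) (hra : 0 < ra) (hrb : 0 < rb) (hI : 1 < I) :
    0 < (Real.exp x * ra) ^ 2 + (Real.exp y * rb) ^ 2 +
      2 * I * (Real.exp x * ra) * (Real.exp y * rb) := by
  have hX : 0 < Real.exp x * ra := by positivity
  have hY : 0 < Real.exp y * rb := by positivity
  nlinarith [mul_pos hX hY, sq_nonneg (Real.exp x * ra + Real.exp y * rb)]

lemma elen_sq (I ra rb x y : ℝ) (hra : 0 < ra) (hrb : 0 < rb) (hI : 1 < I) :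
    elen I ra rb x y ^ 2 = (Real.exp x * ra) ^ 2 + (Real.exp y * rb) ^ 2 +
      2 * I * (Real.exp x * ra) * (Real.exp y * rb) :=
  Real.sq_sqrt (elen_arg_pos I ra rb x y hra hrb hI).le

lemma elen_pos (I ra rb x y : ℝ) (hra : 0 < ra) (hrb : 0 < rb) (hI : 1 < I) :
    0 < elen I ra rb x y :=
  Real.sqrt_pos.2 (elen_arg_pos I ra rb x y hra hrb hI)

lemma height_aux (Ri Rj Rk Iij Ijk Iki a b c : ℝ)
    (hRi0 : 0 < Ri) (hRj0 : 0 < Rj) (hRk0 : 0 < Rk)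
    (ha0 : 0 < a) (hb0 : 0 < b) (hc0 : 0 < c)
    (ha2 : a ^ 2 = Ri ^ 2 + Rj ^ 2 + 2 * Iij * Ri * Rj)
    (hb2 : b ^ 2 = Rk ^ 2 + Ri ^ 2 + 2 * Iki * Rk * Ri)
    (hc2 : c ^ 2 = Rj ^ 2 + Rk ^ 2 + 2 * Ijk * Rj * Rk)
    (t1 : a < c + b) (t2 : c < b + a) (t3 : b < a + c) :
    ((Ri ^ 2 + Iki * Ri * Rk) / b - (Ri ^ 2 + Iij * Ri * Rj) / a * Real.cos (ang a b c)) /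
        Real.sin (ang a b c) =
      ((Rj ^ 2 + Ijk * Rj * Rk) / c - (Rj ^ 2 + Iij * Rj * Ri) / a * Real.cos (ang a c b)) /
        Real.sin (ang a c b) := by
  have hp1 : (a ^ 2 + b ^ 2 - c ^ 2) / (2 * a * b) < 1 := by
    rw [div_lt_one (by positivity)]; nlinarith
  have hpm1 : -1 < (a ^ 2 + b ^ 2 - c ^ 2) / (2 * a * b) := by
    rw [lt_div_iff₀ (by positivity)]; nlinarith
  have hq1 : (a ^ 2 + c ^ 2 - b ^ 2) / (2 * a * c) < 1 := by
    rw [div_lt_one (by positivity)]; nlinarith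
  have hqm1 : -1 < (a ^ 2 + c ^ 2 - b ^ 2) / (2 * a * c) := by
    rw [lt_div_iff₀ (by positivity)]; nlinarith
  have hcosI : Real.cos (ang a b c) = (a ^ 2 + b ^ 2 - c ^ 2) / (2 * a * b) := by
    rw [ang, Real.cos_arccos (by linarith) (by linarith)]
  have hcosJ : Real.cos (ang a c b) = (a ^ 2 + c ^ 2 - b ^ 2) / (2 * a * c) := by
    rw [ang, Real.cos_arccos (by linarith) (by linarith)]
  have hQ0 : 0 < 4 * a ^ 2 * b ^ 2 - (a ^ 2 + b ^ 2 - c ^ 2) ^ 2 := by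
    have h1 : 0 < a + b + c := by linarith
    have h2 : 0 < a + b - c := by linarith
    have h3 : 0 < c + a - b := by linarith
    have h4 : 0 < b + c - a := by linarith
    nlinarith [mul_pos (mul_pos (mul_pos h1 h2) h3) h4]
  set Q : ℝ := 4 * a ^ 2 * b ^ 2 - (a ^ 2 + b ^ 2 - c ^ 2) ^ 2 with hQdef
  have hsinI : Real.sin (ang a b c) = Real.sqrt Q / (2 * a * b) := by
    rw [ang, Real.sin_arccos]
    rw [show 1 - ((a ^ 2 + b ^ 2 - c ^ 2) / (2 * a * b)) ^ 2 = Q / (2 * a * b) ^ 2 by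
      rw [hQdef]; field_simp; ring]
    rw [Real.sqrt_div hQ0.le, Real.sqrt_sq (by positivity)]
  have hsinJ : Real.sin (ang a c b) = Real.sqrt Q / (2 * a * c) := by
    rw [ang, Real.sin_arccos]
    rw [show 1 - ((a ^ 2 + c ^ 2 - b ^ 2) / (2 * a * c)) ^ 2 = Q / (2 * a * c) ^ 2 by
      rw [hQdef]; field_simp; ring]
    rw [Real.sqrt_div hQ0.le, Real.sqrt_sq (by positivity)]
  have hS0 : 0 < Real.sqrt Q := Real.sqrt_pos.2 hQ0
  rw [hcosI, hcosJ, hsinI, hsinJ]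
  have ha' : a ≠ 0 := ne_of_gt ha0
  have key0 : 2 * a ^ 2 * (Ri ^ 2 + Iki * Ri * Rk) -
        (Ri ^ 2 + Iij * Ri * Rj) * (a ^ 2 + b ^ 2 - c ^ 2) =
      2 * a ^ 2 * (Rj ^ 2 + Ijk * Rj * Rk) -
        (Rj ^ 2 + Iij * Rj * Ri) * (a ^ 2 + c ^ 2 - b ^ 2) := by
    linear_combination (Ri ^ 2 - Rj ^ 2 + 2 * Iki * Ri * Rk - 2 * Ijk * Rj * Rk) * ha2
      - (Ri ^ 2 + Rj ^ 2 + 2 * Iij * Ri * Rj) * hb2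
      + (Ri ^ 2 + Rj ^ 2 + 2 * Iij * Ri * Rj) * hc2
  have key : ((Ri ^ 2 + Iki * Ri * Rk) / b -
        (Ri ^ 2 + Iij * Ri * Rj) / a * ((a ^ 2 + b ^ 2 - c ^ 2) / (2 * a * b))) * b =
      ((Rj ^ 2 + Ijk * Rj * Rk) / c -
        (Rj ^ 2 + Iij * Rj * Ri) / a * ((a ^ 2 + c ^ 2 - b ^ 2) / (2 * a * c))) * c := by
    have hb'' : b ≠ 0 := ne_of_gt hb0
    have hc'' : c ≠ 0 := ne_of_gt hc0
    have e1 : ((Ri ^ 2 + Iki * Ri * Rk) / b -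
        (Ri ^ 2 + Iij * Ri * Rj) / a * ((a ^ 2 + b ^ 2 - c ^ 2) / (2 * a * b))) * b =
        (2 * a ^ 2 * (Ri ^ 2 + Iki * Ri * Rk) -
          (Ri ^ 2 + Iij * Ri * Rj) * (a ^ 2 + b ^ 2 - c ^ 2)) / (2 * a ^ 2) := by
      field_simp
    have e2 : ((Rj ^ 2 + Ijk * Rj * Rk) / c -
        (Rj ^ 2 + Iij * Rj * Ri) / a * ((a ^ 2 + c ^ 2 - b ^ 2) / (2 * a * c))) * c =
        (2 * a ^ 2 * (Rj ^ 2 + Ijk * Rj * Rk) -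
          (Rj ^ 2 + Iij * Rj * Ri) * (a ^ 2 + c ^ 2 - b ^ 2)) / (2 * a ^ 2) := by
      field_simp
    rw [e1, e2, key0]
  have hb' : b ≠ 0 := ne_of_gt hb0
  have hc' : c ≠ 0 := ne_of_gt hc0
  have hS' : Real.sqrt Q ≠ 0 := ne_of_gt hS0
  set X : ℝ := (Ri ^ 2 + Iki * Ri * Rk) / b -
      (Ri ^ 2 + Iij * Ri * Rj) / a * ((a ^ 2 + b ^ 2 - c ^ 2) / (2 * a * b)) with hX
  set Y : ℝ := (Rj ^ 2 + Ijk * Rj * Rk) / c -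
      (Rj ^ 2 + Iij * Rj * Ri) / a * ((a ^ 2 + c ^ 2 - b ^ 2) / (2 * a * c)) with hY
  rw [div_eq_div_iff (by positivity) (by positivity)]
  have e3 : X * (Real.sqrt Q / (2 * a * c)) = (X * b) * (Real.sqrt Q / (2 * a * b * c)) := by
    field_simp [ha', hb', hc']
  have e4 : Y * (Real.sqrt Q / (2 * a * b)) = (Y * c) * (Real.sqrt Q / (2 * a * b * c)) := by
    field_simp [ha', hb', hc']
  rw [e3, e4, key]

set_option maxHeartbeats 2000000 in
/-- The height `h_ij^k` can be computed from either endpoint of the edge `{ij}`. -/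
theorem height_well_defined (ri rj rk Iij Ijk Iki : ℝ) (hri : 0 < ri) (hrj : 0 < rj) (hrk : 0 < rk)
    (hIij : 1 < Iij) (hIjk : 1 < Ijk) (hIki : 1 < Iki)
    (ui uj uk : ℝ) (hnd : NondegT ri rj rk Iij Ijk Iki ui uj uk) :
    (Dik ri rj rk Iij Ijk Iki ui uj uk - Dij ri rj rk Iij Ijk Iki ui uj uk * Real.cos (ThI ri rj rk Iij Ijk Iki ui uj uk)) /
        Real.sin (ThI ri rj rk Iij Ijk Iki ui uj uk) =
      (Djk ri rj rk Iij Ijk Iki ui uj uk - Dji ri rj rk Iij Ijk Iki ui uj uk * Real.cos (ThJ ri rj rk Iij Ijk Iki ui uj uk)) /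
        Real.sin (ThJ ri rj rk Iij Ijk Iki ui uj uk) := by
  obtain ⟨t1, t2, t3⟩ := hnd
  have hRi0 : (0:ℝ) < Real.exp ui * ri := by positivity
  have hRj0 : (0:ℝ) < Real.exp uj * rj := by positivity
  have hRk0 : (0:ℝ) < Real.exp uk * rk := by positivity
  have ha0 : 0 < Lij ri rj rk Iij Ijk Iki ui uj uk := elen_pos _ _ _ _ _ hri hrj hIij
  have hc0 : 0 < Ljk ri rj rk Iij Ijk Iki ui uj uk := elen_pos _ _ _ _ _ hrj hrk hIjk
  have hb0 : 0 < Lki ri rj rk Iij Ijk Iki ui uj uk := elen_pos _ _ _ _ _ hrk hri hIki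
  have ha2 := elen_sq Iij ri rj ui uj hri hrj hIij
  have hc2 := elen_sq Ijk rj rk uj uk hrj hrk hIjk
  have hb2 := elen_sq Iki rk ri uk ui hrk hri hIki
  have H := height_aux (Real.exp ui * ri) (Real.exp uj * rj) (Real.exp uk * rk) Iij Ijk Iki
    (Lij ri rj rk Iij Ijk Iki ui uj uk) (Lki ri rj rk Iij Ijk Iki ui uj uk)
    (Ljk ri rj rk Iij Ijk Iki ui uj uk) hRi0 hRj0 hRk0 ha0 hb0 hc0
    (by rw [Lij]; exact ha2) (by rw [Lki]; exact hb2) (by rw [Ljk]; exact hc2) t1 t2 t3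
  simp only [Dik, Dij, Djk, Dji, ThI, ThJ, dCen]
  exact H
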